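/- Every formula built from ⊤, ⊥, atoms, →, ∧, and ∀ is equal, modulo the congruence generated by the type-isomorphism equations (associativity of ∧, units A∧⊤=A=⊤∧A, currying (A∧B)→C = A→(B→C), ⊤→A=A, distribution A→(B∧C) = (A→B)∧(A→C), A→⊤=⊤, ∀x(A∧B)=∀xA∧∀xB, ∀x⊤=⊤, and A→∀xB = ∀x(A→B) for x not free in A), to a formula in canonical form. -/
import Mathlib


/-- First-order formulas: ⊤, ⊥, non-constant atoms `X t⃗` (atoms applied to
de Bruijn term-variable indices), implication, conjunction and universal
quantification (de Bruijn style: `all A` binds index 0). -/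
inductive Formula : Type where
  | top : Formula
  | bot : Formula
  | atom : ℕ → List ℕ → Formula
  | arr : Formula → Formula → Formula
  | and : Formula → Formula → Formula
  | all : Formula → Formula

/-- The measure φ on formulas. -/
def phi : Formula → ℕ
  | .top => 2
  | .bot => 2
  | .atom _ _ => 2
  | .and A B => 2 * (phi A + 1) * phi B
  | .arr A B => phi B ^ phi A
  | .all A => phi A ^ 2

/-- The measure ψ on formulas. -/
def psi : Formula → ℕ
  | .top => 2
  | .bot => 2
  | .atom _ _ => 2
  | .and A B => 2 * (psi A + 1) * psi B
  | .arr A B => psi B ^ psi A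
  | .all A => 2 * psi A

/-- Shift the free de Bruijn term-variable indices ≥ c up by one. -/
def Formula.shiftFrom : ℕ → Formula → Formula
  | _, .top => .top
  | _, .bot => .bot
  | c, .atom X args => .atom X (args.map fun n => if n < c then n else n + 1)
  | c, .arr A B => .arr (A.shiftFrom c) (B.shiftFrom c)
  | c, .and A B => .and (A.shiftFrom c) (B.shiftFrom c)
  | c, .all A => .all (A.shiftFrom (c + 1))

/-- `A.shift` is A regarded under one more binder ("x not free in A"). -/
def Formula.shift (A : Formula) : Formula := A.shiftFrom 0

/-- The congruence generated by the type-isomorphism equations. -/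
inductive Iso : Formula → Formula → Prop where
  | andAssoc (A B C) : Iso (.and A (.and B C)) (.and (.and A B) C)
  | andTopR (A) : Iso (.and A .top) A
  | andTopL (A) : Iso (.and .top A) A
  | curry (A B C) : Iso (.arr (.and A B) C) (.arr A (.arr B C))
  | topArr (A) : Iso (.arr .top A) A
  | distrib (A B C) : Iso (.arr A (.and B C)) (.and (.arr A B) (.arr A C))
  | arrTop (A) : Iso (.arr A .top) .top
  | allAnd (A B) : Iso (.all (.and A B)) (.and (.all A) (.all B))
  | allTop : Iso (.all .top) .top
  | arrAll (A B) : Iso (.arr A (.all B)) (.all (.arr A.shift B))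
  | refl (A) : Iso A A
  | symm {A B} : Iso A B → Iso B A
  | trans {A B C} : Iso A B → Iso B C → Iso A C
  | arrCong {A A' B B'} : Iso A A' → Iso B B' → Iso (.arr A B) (.arr A' B')
  | andCong {A A' B B'} : Iso A A' → Iso B B' → Iso (.and A B) (.and A' B')
  | allCong {A A'} : Iso A A' → Iso (.all A) (.all A')

/-- Canonical atoms: R ::= atom | ⊥. -/
inductive IsR : Formula → Prop where
  | atom (X ts) : IsR (.atom X ts)
  | bot : IsR .bot

mutual
/-- Canonical →-forms: A ::= R | Q→A. -/
inductive IsA : Formula → Prop where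
  | ofR {A} : IsR A → IsA A
  | arr {Q A} : IsQ Q → IsA A → IsA (.arr Q A)

/-- Canonical ∀-forms: Q ::= A | ∀x Q. -/
inductive IsQ : Formula → Prop where
  | ofA {A} : IsA A → IsQ A
  | all {A} : IsQ A → IsQ (.all A)
end

/-- Canonical conjunctions: B ::= Q | B∧Q. -/
inductive IsB : Formula → Prop where
  | ofQ {A} : IsQ A → IsB A
  | and {B Q} : IsB B → IsQ Q → IsB (.and B Q)

/-- Canonical forms: C ::= B | ⊤. -/
inductive IsC : Formula → Prop where
  | ofB {A} : IsB A → IsC A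
  | top : IsC .top

lemma shiftAQ : ∀ A c, (IsA A → IsA (A.shiftFrom c)) ∧ (IsQ A → IsQ (A.shiftFrom c)) := by
  intro A
  induction A with
  | top =>
    intro c
    refine ⟨fun h => ?_, fun h => ?_⟩
    · cases h with | ofR r => cases r
    · cases h with | ofA hA => cases hA with | ofR r => cases r
  | bot => intro c; exact ⟨fun _ => .ofR .bot, fun _ => .ofA (.ofR .bot)⟩
  | atom X ts => intro c; exact ⟨fun _ => .ofR (.atom _ _), fun _ => .ofA (.ofR (.atom _ _))⟩
  | arr A B ihA ihB =>
    intro c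
    refine ⟨fun h => ?_, fun h => ?_⟩
    · cases h with
      | ofR r => cases r
      | arr hQ hA => exact .arr ((ihA c).2 hQ) ((ihB c).1 hA)
    · cases h with
      | ofA hA =>
        cases hA with
        | ofR r => cases r
        | arr hQ hA => exact .ofA (.arr ((ihA c).2 hQ) ((ihB c).1 hA))
  | and A B ihA ihB =>
    intro c
    refine ⟨fun h => ?_, fun h => ?_⟩
    · cases h with | ofR r => cases r
    · cases h with | ofA hA => cases hA with | ofR r => cases r
  | all A ih =>
    intro c
    refine ⟨fun h => ?_, fun h => ?_⟩
    · cases h with | ofR r => cases r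
    · cases h with
      | ofA hA => cases hA with | ofR r => cases r
      | all hQ => exact .all ((ih (c+1)).2 hQ)

lemma shiftQ {A : Formula} (h : IsQ A) : IsQ A.shift := (shiftAQ A 0).2 h

lemma arrQQ : ∀ q2 q1, IsQ q1 → IsQ q2 → ∃ q, Iso (.arr q1 q2) q ∧ IsQ q := by
  intro q2
  induction q2 with
  | all B ih =>
    intro q1 h1 h2
    cases h2 with
    | ofA hA => cases hA with | ofR r => cases r
    | all hQ =>
      obtain ⟨q, hiso, hq⟩ := ih q1.shift (shiftQ h1) hQ
      exact ⟨.all q, (Iso.arrAll q1 B).trans (Iso.allCong hiso), .all hq⟩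
  | top =>
    intro q1 h1 h2
    cases h2 with | ofA hA => exact ⟨_, Iso.refl _, .ofA (.arr h1 hA)⟩
  | bot =>
    intro q1 h1 h2
    cases h2 with | ofA hA => exact ⟨_, Iso.refl _, .ofA (.arr h1 hA)⟩
  | atom X ts =>
    intro q1 h1 h2
    cases h2 with | ofA hA => exact ⟨_, Iso.refl _, .ofA (.arr h1 hA)⟩
  | arr A B _ _ =>
    intro q1 h1 h2
    cases h2 with | ofA hA => exact ⟨_, Iso.refl _, .ofA (.arr h1 hA)⟩
  | and A B _ _ =>
    intro q1 h1 h2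
    cases h2 with | ofA hA => exact ⟨_, Iso.refl _, .ofA (.arr h1 hA)⟩

lemma arrBQ : ∀ b q, IsB b → IsQ q → ∃ q', Iso (.arr b q) q' ∧ IsQ q' := by
  intro b
  induction b with
  | and B Q ihB _ =>
    intro q hb hq
    cases hb with
    | ofQ hQ => exact arrQQ q _ hQ hq
    | and hB hQ =>
      obtain ⟨q1, h1, hq1⟩ := arrQQ q Q hQ hq
      obtain ⟨q2, h2, hq2⟩ := ihB q1 hB hq1
      exact ⟨q2, (Iso.curry B Q q).trans ((Iso.arrCong (Iso.refl B) h1).trans h2), hq2⟩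
  | top => intro q hb hq; cases hb with | ofQ hQ => exact arrQQ q _ hQ hq
  | bot => intro q hb hq; cases hb with | ofQ hQ => exact arrQQ q _ hQ hq
  | atom X ts => intro q hb hq; cases hb with | ofQ hQ => exact arrQQ q _ hQ hq
  | arr A B _ _ => intro q hb hq; cases hb with | ofQ hQ => exact arrQQ q _ hQ hq
  | all A _ => intro q hb hq; cases hb with | ofQ hQ => exact arrQQ q _ hQ hq

lemma arrBB : ∀ b2 b1, IsB b1 → IsB b2 → ∃ b, Iso (.arr b1 b2) b ∧ IsB b := by
  intro b2
  induction b2 with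
  | and B Q ihB _ =>
    intro b1 h1 h2
    cases h2 with
    | ofQ hQ => obtain ⟨q', h, hq⟩ := arrBQ b1 _ h1 hQ; exact ⟨q', h, .ofQ hq⟩
    | and hB hQ =>
      obtain ⟨b', hb', hB'⟩ := ihB b1 h1 hB
      obtain ⟨q', hq', hQ'⟩ := arrBQ b1 Q h1 hQ
      exact ⟨.and b' q', (Iso.distrib b1 B Q).trans (Iso.andCong hb' hq'), .and hB' hQ'⟩
  | top =>
    intro b1 h1 h2
    cases h2 with | ofQ hQ =>
      obtain ⟨q', h, hq⟩ := arrBQ b1 _ h1 hQ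
      exact ⟨q', h, .ofQ hq⟩
  | bot =>
    intro b1 h1 h2
    cases h2 with | ofQ hQ =>
      obtain ⟨q', h, hq⟩ := arrBQ b1 _ h1 hQ
      exact ⟨q', h, .ofQ hq⟩
  | atom X ts =>
    intro b1 h1 h2
    cases h2 with | ofQ hQ =>
      obtain ⟨q', h, hq⟩ := arrBQ b1 _ h1 hQ
      exact ⟨q', h, .ofQ hq⟩
  | arr A B _ _ =>
    intro b1 h1 h2
    cases h2 with | ofQ hQ =>
      obtain ⟨q', h, hq⟩ := arrBQ b1 _ h1 hQ
      exact ⟨q', h, .ofQ hq⟩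
  | all A _ =>
    intro b1 h1 h2
    cases h2 with | ofQ hQ =>
      obtain ⟨q', h, hq⟩ := arrBQ b1 _ h1 hQ
      exact ⟨q', h, .ofQ hq⟩

lemma andBB : ∀ b2 b1, IsB b1 → IsB b2 → ∃ b, Iso (.and b1 b2) b ∧ IsB b := by
  intro b2
  induction b2 with
  | and B Q ihB _ =>
    intro b1 h1 h2
    cases h2 with
    | ofQ hQ => exact ⟨_, Iso.refl _, .and h1 hQ⟩
    | and hB hQ =>
      obtain ⟨b', hb', hB'⟩ := ihB b1 h1 hB
      exact ⟨.and b' Q, (Iso.andAssoc b1 B Q).trans (Iso.andCong hb' (Iso.refl Q)), .and hB' hQ⟩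
  | top => intro b1 h1 h2; cases h2 with | ofQ hQ => exact ⟨_, Iso.refl _, .and h1 hQ⟩
  | bot => intro b1 h1 h2; cases h2 with | ofQ hQ => exact ⟨_, Iso.refl _, .and h1 hQ⟩
  | atom X ts => intro b1 h1 h2; cases h2 with | ofQ hQ => exact ⟨_, Iso.refl _, .and h1 hQ⟩
  | arr A B _ _ => intro b1 h1 h2; cases h2 with | ofQ hQ => exact ⟨_, Iso.refl _, .and h1 hQ⟩
  | all A _ => intro b1 h1 h2; cases h2 with | ofQ hQ => exact ⟨_, Iso.refl _, .and h1 hQ⟩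

lemma allB : ∀ b, IsB b → ∃ b', Iso (.all b) b' ∧ IsB b' := by
  intro b
  induction b with
  | and B Q ihB _ =>
    intro h
    cases h with
    | ofQ hQ => exact ⟨_, Iso.refl _, .ofQ (.all hQ)⟩
    | and hB hQ =>
      obtain ⟨b', hb', hB'⟩ := ihB hB
      exact ⟨.and b' (.all Q), (Iso.allAnd B Q).trans (Iso.andCong hb' (Iso.refl _)), .and hB' (.all hQ)⟩
  | top => intro h; cases h with | ofQ hQ => exact ⟨_, Iso.refl _, .ofQ (.all hQ)⟩
  | bot => intro h; cases h with | ofQ hQ => exact ⟨_, Iso.refl _, .ofQ (.all hQ)⟩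
  | atom X ts => intro h; cases h with | ofQ hQ => exact ⟨_, Iso.refl _, .ofQ (.all hQ)⟩
  | arr A B _ _ => intro h; cases h with | ofQ hQ => exact ⟨_, Iso.refl _, .ofQ (.all hQ)⟩
  | all A _ => intro h; cases h with | ofQ hQ => exact ⟨_, Iso.refl _, .ofQ (.all hQ)⟩

lemma andCC {c1 c2 : Formula} (h1 : IsC c1) (h2 : IsC c2) :
    ∃ c, Iso (.and c1 c2) c ∧ IsC c := by
  cases h1 with
  | top => exact ⟨c2, Iso.andTopL c2, h2⟩
  | ofB hb1 =>
    cases h2 with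
    | top => exact ⟨c1, Iso.andTopR c1, .ofB hb1⟩
    | ofB hb2 =>
      obtain ⟨b, h, hb⟩ := andBB c2 c1 hb1 hb2
      exact ⟨b, h, .ofB hb⟩

lemma arrCC {c1 c2 : Formula} (h1 : IsC c1) (h2 : IsC c2) :
    ∃ c, Iso (.arr c1 c2) c ∧ IsC c := by
  cases h2 with
  | top => exact ⟨.top, Iso.arrTop c1, .top⟩
  | ofB hb2 =>
    cases h1 with
    | top => exact ⟨c2, Iso.topArr c2, .ofB hb2⟩
    | ofB hb1 =>
      obtain ⟨b, h, hb⟩ := arrBB c2 c1 hb1 hb2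
      exact ⟨b, h, .ofB hb⟩

lemma allCC {c : Formula} (h : IsC c) : ∃ c', Iso (.all c) c' ∧ IsC c' := by
  cases h with
  | top => exact ⟨.top, Iso.allTop, .top⟩
  | ofB hb =>
    obtain ⟨b', h', hb'⟩ := allB c hb
    exact ⟨b', h', .ofB hb'⟩

/-- Every formula is isomorphic (modulo the congruence generated by the
type-isomorphism equations) to a formula in canonical form. -/
theorem exists_canonical_form : ∀ A : Formula, ∃ B : Formula, Iso A B ∧ IsC B := by
  intro A
  induction A with
  | top => exact ⟨.top, Iso.refl _, .top⟩
  | bot => exact ⟨.bot, Iso.refl _, .ofB (.ofQ (.ofA (.ofR .bot)))⟩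
  | atom X ts => exact ⟨_, Iso.refl _, .ofB (.ofQ (.ofA (.ofR (.atom X ts))))⟩
  | arr A B ihA ihB =>
    obtain ⟨cA, hA, hcA⟩ := ihA
    obtain ⟨cB, hB, hcB⟩ := ihB
    obtain ⟨c, h, hc⟩ := arrCC hcA hcB
    exact ⟨c, (Iso.arrCong hA hB).trans h, hc⟩
  | and A B ihA ihB =>
    obtain ⟨cA, hA, hcA⟩ := ihA
    obtain ⟨cB, hB, hcB⟩ := ihB
    obtain ⟨c, h, hc⟩ := andCC hcA hcB
    exact ⟨c, (Iso.andCong hA hB).trans h, hc⟩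
  | all A ihA =>
    obtain ⟨cA, hA, hcA⟩ := ihA
    obtain ⟨c, h, hc⟩ := allCC hcA
    exact ⟨c, (Iso.allCong hA).trans h, hc⟩
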